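/- Let $\alpha > 0$, $p \geq 1$, $A$ a positive integer, and $b, \lambda \in \mathbb{C}$ with $\lambda \neq 0$ and $|b/\lambda| > \alpha$. Then $\int_{\mathbb{C}} e^{p\,\mathrm{Re}(b z^A/\lambda) - p\alpha |z|^A}\,dA(z) = \infty$; that is, the function $e^{bz^A/\lambda}$ does not belong to the Fock space $\mathcal{F}^p_{\alpha,A}$. -/

import Mathlib

open MeasureTheory

theorem stmt2 (p α : ℝ) (hp : 1 ≤ p) (hα : 0 < α) (A : ℕ) (hA : 0 < A)
    (b lam : ℂ) (hlam : lam ≠ 0) (hb : α < ‖b / lam‖) :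
    ∫⁻ z : ℂ, ENNReal.ofReal
      (Real.exp (p * (b * z ^ A / lam).re - p * α * ‖z‖ ^ A)) = ⊤ := by
  set β : ℂ := b / lam with hβdef
  have hβ0 : β ≠ 0 := by
    intro h
    rw [h] at hb
    simp at hb
    linarith
  -- g is the exponent divided by p
  set g : ℂ → ℝ := fun z => (β * z ^ A).re - α * ‖z‖ ^ A with hg
  -- a direction u where g u = |β| - α > 0
  obtain ⟨u, hu⟩ := IsAlgClosed.exists_pow_nat_eq
    ((starRingEnd ℂ) β / (‖β‖ : ℂ)) hA
  have habsβ : (0:ℝ) < ‖β‖ := lt_trans hα hb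
  have hu1 : ‖u‖ = 1 := by
    have h1 : ‖u‖ ^ A = 1 := by
      rw [← norm_pow, hu]
      rw [norm_div, Complex.norm_conj]
      simp [ abs_of_pos habsβ, div_self (ne_of_gt habsβ)]
    exact (pow_left_inj₀ (norm_nonneg u) zero_le_one hA.ne').mp
      (by rw [h1, one_pow])
  have hgu : g u = ‖β‖ - α := by
    simp only [hg, hu, hu1, one_pow, mul_one]
    have : β * ((starRingEnd ℂ) β / (‖β‖ : ℂ)) = ((‖β‖ : ℝ) : ℂ) := by
      rw [mul_div_assoc', Complex.mul_conj, Complex.normSq_eq_norm_sq]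
      have h0 : ((‖β‖ : ℝ) : ℂ) ≠ 0 := by exact_mod_cast habsβ.ne'
      field_simp
      push_cast
      ring
    rw [this, Complex.ofReal_re]
  have hgcont : Continuous g := by
    apply Continuous.sub
    · exact (Complex.continuous_re.comp (continuous_const.mul (continuous_pow A)))
    · exact continuous_const.mul ((continuous_norm).pow A)
  -- positivity on a ball around u
  have hgu_pos : 0 < g u := by rw [hgu]; linarith
  obtain ⟨ε, hε, hball⟩ : ∃ ε > 0, ∀ z ∈ Metric.ball u ε, 0 ≤ g z := by
    have h2 := (continuousAt_const (y := (0:ℝ))).eventually_lt (hgcont.continuousAt (x := u))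
      (by simpa using hgu_pos)
    rw [Metric.eventually_nhds_iff_ball] at h2
    obtain ⟨ε, hε, h⟩ := h2
    exact ⟨ε, hε, fun z hz => le_of_lt (h z hz)⟩
  -- homogeneity of g
  have hhom : ∀ (t : ℝ), 0 ≤ t → ∀ w : ℂ, g ((t : ℂ) * w) = t ^ A * g w := by
    intro t ht w
    simp only [hg, mul_pow, map_mul, norm_mul, Complex.norm_real, Real.norm_eq_abs, abs_of_nonneg ht]
    have : β * ((t:ℂ) ^ A * w ^ A) = ((t ^ A : ℝ) : ℂ) * (β * w ^ A) := by
      push_cast; ring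
    rw [this, Complex.re_ofReal_mul]
    ring
  set S : Set ℂ := {z | 0 ≤ g z} with hS
  have hSmeas : MeasurableSet S := measurableSet_le measurable_const hgcont.measurable
  have hSball : ∀ t : ℝ, 0 < t → Metric.ball ((t : ℂ) * u) (t * ε) ⊆ S := by
    intro t ht z hz
    have hw : (t : ℂ)⁻¹ * z ∈ Metric.ball u ε := by
      rw [Metric.mem_ball] at hz ⊢
      have ht0 : (t : ℂ) ≠ 0 := by exact_mod_cast ht.ne'
      have : dist ((t:ℂ)⁻¹ * z) u = t⁻¹ * dist z ((t:ℂ) * u) := by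
        rw [Complex.dist_eq, Complex.dist_eq]
        have : (t:ℂ)⁻¹ * z - u = (t:ℂ)⁻¹ * (z - (t:ℂ) * u) := by
          field_simp
        rw [this, norm_mul, norm_inv, Complex.norm_real, Real.norm_eq_abs, abs_of_pos ht]
      rw [this]
      calc t⁻¹ * dist z ((t:ℂ) * u) < t⁻¹ * (t * ε) := by
            exact mul_lt_mul_of_pos_left hz (inv_pos.mpr ht)
        _ = ε := by field_simp
    have h0 : 0 ≤ g ((t:ℂ)⁻¹ * z) := hball _ hw
    have hz' : z = (t : ℂ) * ((t:ℂ)⁻¹ * z) := by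
      have ht0 : (t : ℂ) ≠ 0 := by exact_mod_cast ht.ne'
      field_simp
    show 0 ≤ g z
    rw [hz', hhom t ht.le]
    positivity
  have hμS : volume S = ⊤ := by
    apply ENNReal.eq_top_of_forall_nnreal_le
    intro r
    set t : ℝ := max 1 (r : ℝ) / ε with htdef
    have ht : 0 < t := by positivity
    have h1 : Metric.ball ((t : ℂ) * u) (t * ε) ⊆ S := hSball t ht
    have h2 : volume (Metric.ball ((t : ℂ) * u) (t * ε)) =
        ENNReal.ofReal (t * ε) ^ 2 * NNReal.pi := Complex.volume_ball _ _
    have htε : t * ε = max 1 (r : ℝ) := div_mul_cancel₀ _ hε.ne'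
    have h3 : (r : ENNReal) ≤ ENNReal.ofReal (t * ε) ^ 2 := by
      rw [htε, ← ENNReal.ofReal_pow (by positivity), ← ENNReal.ofReal_coe_nnreal]
      apply ENNReal.ofReal_le_ofReal
      nlinarith [le_max_left 1 (r:ℝ), le_max_right 1 (r:ℝ), r.coe_nonneg]
    have hπ : (1 : ENNReal) ≤ NNReal.pi := by
      rw [← ENNReal.coe_one, ENNReal.coe_le_coe, ← NNReal.coe_le_coe]
      exact le_trans (by norm_num) Real.pi_gt_three.le
    calc (r : ENNReal) ≤ ENNReal.ofReal (t * ε) ^ 2 * NNReal.pi :=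
          le_trans h3 (le_mul_of_one_le_right zero_le hπ)
      _ = volume (Metric.ball ((t : ℂ) * u) (t * ε)) := h2.symm
      _ ≤ volume S := measure_mono h1
  -- conclude
  rw [eq_top_iff, ← hμS, ← lintegral_indicator_one hSmeas]
  apply lintegral_mono
  intro z
  by_cases hz : z ∈ S
  · rw [Set.indicator_of_mem hz, Pi.one_apply]
    show (1 : ENNReal) ≤ ENNReal.ofReal
      (Real.exp (p * (b * z ^ A / lam).re - p * α * ‖z‖ ^ A))
    have hgz : 0 ≤ g z := hz
    have hexp : p * (b * z ^ A / lam).re - p * α * ‖z‖ ^ A = p * g z := by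
      have : b * z ^ A / lam = β * z ^ A := by
        rw [hβdef]; ring
      rw [this, hg]; ring
    rw [hexp]
    have : (1:ℝ) ≤ Real.exp (p * g z) := by
      rw [Real.one_le_exp_iff]
      positivity
    calc (1 : ENNReal) = ENNReal.ofReal 1 := by simp
      _ ≤ _ := ENNReal.ofReal_le_ofReal this
  · rw [Set.indicator_of_notMem hz]
    exact zero_le
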